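/- For fixed s ∈ (0,1], the function F_s(x) = (1 + x^s)^(1/s) / (1 + x) is non-decreasing on [0,1]. -/

import Mathlib

open Real Set

theorem F_monotone (s : ℝ) (hs : s ∈ Set.Ioc (0:ℝ) 1) :
    MonotoneOn (fun x : ℝ => (1 + x ^ s) ^ (1/s) / (1 + x)) (Set.Icc (0:ℝ) 1) := by
  obtain ⟨hs0, hs1⟩ := hs
  have hcont : ContinuousOn (fun x : ℝ => (1 + x ^ s) ^ (1/s) / (1 + x)) (Set.Icc (0:ℝ) 1) := by
    apply ContinuousOn.div
    · apply ContinuousOn.rpow_const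
      · exact continuousOn_const.add (fun x hx => (Real.continuousAt_rpow_const x s (Or.inr hs0.le)).continuousWithinAt)
      · intro x hx
        left
        have hxs : 0 ≤ x ^ s := Real.rpow_nonneg hx.1 s
        nlinarith
    · fun_prop
    · intro x hx
      have := hx.1
      positivity
  apply monotoneOn_of_deriv_nonneg (convex_Icc 0 1) hcont
  · rw [interior_Icc]
    intro x hx
    have hx0 : 0 < x := hx.1
    have hpos : (0:ℝ) < 1 + x ^ s := by positivity
    have h1 : HasDerivAt (fun y : ℝ => 1 + y ^ s) (s * x ^ (s-1)) x :=
      (Real.hasDerivAt_rpow_const (Or.inl hx0.ne')).const_add 1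
    have h3 : HasDerivAt (fun y : ℝ => y ^ (1/s)) ((1/s) * (1 + x ^ s) ^ (1/s - 1)) (1 + x ^ s) :=
      Real.hasDerivAt_rpow_const (Or.inl hpos.ne')
    have hg := h3.comp x h1
    have hden : HasDerivAt (fun y : ℝ => 1 + y) 1 x := (hasDerivAt_id x).const_add 1
    have hne : (1:ℝ) + x ≠ 0 := by linarith
    exact ((hg.div hden hne).differentiableAt).differentiableWithinAt
  · rw [interior_Icc]
    intro x hx
    have hx0 : 0 < x := hx.1
    have hx1 : x ≤ 1 := le_of_lt hx.2
    have hpos : (0:ℝ) < 1 + x ^ s := by positivity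
    have h1 : HasDerivAt (fun y : ℝ => 1 + y ^ s) (s * x ^ (s-1)) x :=
      (Real.hasDerivAt_rpow_const (Or.inl hx0.ne')).const_add 1
    have h3 : HasDerivAt (fun y : ℝ => y ^ (1/s)) ((1/s) * (1 + x ^ s) ^ (1/s - 1)) (1 + x ^ s) :=
      Real.hasDerivAt_rpow_const (Or.inl hpos.ne')
    have hg : HasDerivAt (fun y : ℝ => (1 + y ^ s) ^ (1/s))
        ((1/s) * (1 + x ^ s) ^ (1/s - 1) * (s * x ^ (s-1))) x := by have := h3.comp x h1; exact this
    have hden : HasDerivAt (fun y : ℝ => 1 + y) 1 x := (hasDerivAt_id x).const_add 1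
    have hne : (1:ℝ) + x ≠ 0 := by linarith
    have hdiv := hg.div hden hne
    rw [show (fun x : ℝ => (1 + x ^ s) ^ (1/s) / (1 + x)) = ((fun y : ℝ => (1 + y ^ s) ^ (1/s)) / fun y => 1 + y) from rfl, hdiv.deriv]
    apply div_nonneg _ (by positivity)
    have hgs : (1/s) * (1 + x ^ s) ^ (1/s - 1) * (s * x ^ (s-1))
        = (1 + x ^ s) ^ (1/s - 1) * x ^ (s-1) := by
      field_simp
    rw [hgs]
    have key : (1 + x ^ s) ^ (1/s) ≤ (1 + x ^ s) ^ (1/s - 1) * x ^ (s-1) * (1 + x) := by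
      have hsplit : (1 + x ^ s) ^ (1/s) = (1 + x ^ s) ^ (1/s - 1) * (1 + x ^ s) := by
        have h := Real.rpow_add hpos (1/s - 1) 1
        rw [Real.rpow_one] at h
        rw [← h]; ring_nf
      rw [hsplit]
      have hx1s : 1 ≤ x ^ (s - 1) :=
        Real.one_le_rpow_of_pos_of_le_one_of_nonpos hx0 hx1 (by linarith)
      have hxs : x ^ (s-1) * x = x ^ s := by
        have h := Real.rpow_add hx0 (s - 1) 1
        rw [Real.rpow_one] at h
        rw [← h]; ring_nf
      have : x ^ (s-1) * (1 + x) = x ^ (s-1) + x ^ s := by rw [mul_add, mul_one, hxs]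
      rw [mul_assoc, this]
      have hp : (0:ℝ) ≤ (1 + x ^ s) ^ (1/s - 1) := Real.rpow_nonneg hpos.le _
      nlinarith
    nlinarith
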